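/- Let k > 4 be an integer and let X₁, X₂, U₁, U₂, U₃ ⊆ ℝ³ be the sets of Example 1, so that X₁ = U₁ ∪ U₂ ∪ U₃. Define φ on X₁ by φ(p) = p for p ∈ U₁, φ(x,y,t) = (x, y−t/2, t) for (x,y,t) ∈ U₂, and φ(x,y,t) = (x−2t, y+t/2, t) for (x,y,t) ∈ U₃. Then there exist ε > 0 and λ ≥ 1 such that φ is a well-defined bijection from X₁ ∩ {0 ≤ t ≤ ε} onto X₂ ∩ {0 ≤ t ≤ ε} satisfying λ⁻¹·‖p−q‖ ≤ ‖φ(p)−φ(q)‖ ≤ λ·‖p−q‖ for all p, q ∈ X₁ ∩ {0 ≤ t ≤ ε}. -/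

import Mathlib

open Set Metric

noncomputable section

/-- The surface `X₁` of Example 1 in `ℝ³` (coordinates `x = p 0`, `y = p 1`, `t = p 2`). -/
def ExampleX1 (k : ℕ) : Set (EuclideanSpace ℝ (Fin 3)) :=
  {p | ((p 0 ^ 2 - 2 * p 0 * p 2 + p 1 ^ 2) * (p 0 ^ 2 + 2 * p 0 * p 2 + p 1 ^ 2) - p 2 ^ k) *
        ((p 0 - p 2) ^ 2 + (p 1 - p 2 / 2) ^ 2 - p 2 ^ 2 / 16) *
        ((p 0 - p 2) ^ 2 + (p 1 + p 2 / 2) ^ 2 - p 2 ^ 2 / 16) = 0 ∧ 0 ≤ p 2}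

/-- The surface `X₂` of Example 1 in `ℝ³`. -/
def ExampleX2 (k : ℕ) : Set (EuclideanSpace ℝ (Fin 3)) :=
  {p | ((p 0 ^ 2 - 2 * p 0 * p 2 + p 1 ^ 2) * (p 0 ^ 2 + 2 * p 0 * p 2 + p 1 ^ 2) - p 2 ^ k) *
        ((p 0 - p 2) ^ 2 + p 1 ^ 2 - p 2 ^ 2 / 16) *
        ((p 0 + p 2) ^ 2 + p 1 ^ 2 - p 2 ^ 2 / 16) = 0 ∧ 0 ≤ p 2}

/-- The piece `U₁` of Example 1 (coordinates `x = p 0`, `y = p 1`, `t = p 2`). -/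
def PieceU1 (k : ℕ) : Set (EuclideanSpace ℝ (Fin 3)) :=
  {p | ((p 0 - p 2) ^ 2 + p 1 ^ 2 - p 2 ^ 2) * ((p 0 + p 2) ^ 2 + p 1 ^ 2 - p 2 ^ 2) = p 2 ^ k ∧
        0 ≤ p 2}

/-- The cone `U₂` over the circle `(x-1)² + (y-1/2)² = 1/16`. -/
def PieceU2 : Set (EuclideanSpace ℝ (Fin 3)) :=
  {p | (p 0 - p 2) ^ 2 + (p 1 - p 2 / 2) ^ 2 = p 2 ^ 2 / 16 ∧ 0 ≤ p 2}

/-- The cone `U₃` over the circle `(x-1)² + (y+1/2)² = 1/16`. -/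
def PieceU3 : Set (EuclideanSpace ℝ (Fin 3)) :=
  {p | (p 0 - p 2) ^ 2 + (p 1 + p 2 / 2) ^ 2 = p 2 ^ 2 / 16 ∧ 0 ≤ p 2}

/-- The cone `V₂` over the circle `(x-1)² + y² = 1/16`. -/
def PieceV2 : Set (EuclideanSpace ℝ (Fin 3)) :=
  {p | (p 0 - p 2) ^ 2 + p 1 ^ 2 = p 2 ^ 2 / 16 ∧ 0 ≤ p 2}

/-- The cone `V₃` over the circle `(x+1)² + y² = 1/16`. -/
def PieceV3 : Set (EuclideanSpace ℝ (Fin 3)) :=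
  {p | (p 0 + p 2) ^ 2 + p 1 ^ 2 = p 2 ^ 2 / 16 ∧ 0 ≤ p 2}


/-! ### Auxiliary material -/

set_option maxHeartbeats 1000000

abbrev E3' := EuclideanSpace ℝ (Fin 3)

def mk3 (a b c : ℝ) : EuclideanSpace ℝ (Fin 3) := WithLp.toLp 2 ![a, b, c]

@[simp] lemma mk3_0 (a b c : ℝ) : mk3 a b c 0 = a := rfl
@[simp] lemma mk3_1 (a b c : ℝ) : mk3 a b c 1 = b := rfl
@[simp] lemma mk3_2 (a b c : ℝ) : mk3 a b c 2 = c := rfl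

lemma sub3 (p q : EuclideanSpace ℝ (Fin 3)) (i : Fin 3) : (p - q) i = p i - q i := rfl

@[simp] lemma zero3 (i : Fin 3) : (0 : EuclideanSpace ℝ (Fin 3)) i = 0 := rfl

lemma ext3 {p q : EuclideanSpace ℝ (Fin 3)} (h0 : p 0 = q 0) (h1 : p 1 = q 1)
    (h2 : p 2 = q 2) : p = q := by
  ext i; fin_cases i <;> assumption

lemma abs_coord_le (v : EuclideanSpace ℝ (Fin 3)) (i : Fin 3) : |v i| ≤ ‖v‖ := by
  rw [EuclideanSpace.norm_eq, ← Real.sqrt_sq_eq_abs]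
  apply Real.sqrt_le_sqrt
  have : v i ^ 2 = ‖v i‖ ^ 2 := by simp [sq_abs]
  rw [this]
  exact Finset.single_le_sum (f := fun j => ‖v j‖ ^ 2) (fun j _ => by positivity)
    (Finset.mem_univ i)

lemma norm_le_abs3 (v : EuclideanSpace ℝ (Fin 3)) : ‖v‖ ≤ |v 0| + |v 1| + |v 2| := by
  rw [EuclideanSpace.norm_eq, Fin.sum_univ_three]
  have h : ‖v 0‖ ^ 2 + ‖v 1‖ ^ 2 + ‖v 2‖ ^ 2 ≤ (|v 0| + |v 1| + |v 2|) ^ 2 := by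
    simp only [Real.norm_eq_abs]
    nlinarith [abs_nonneg (v 0), abs_nonneg (v 1), abs_nonneg (v 2),
      mul_nonneg (abs_nonneg (v 0)) (abs_nonneg (v 1)),
      mul_nonneg (abs_nonneg (v 0)) (abs_nonneg (v 2)),
      mul_nonneg (abs_nonneg (v 1)) (abs_nonneg (v 2))]
  calc Real.sqrt (‖v 0‖ ^ 2 + ‖v 1‖ ^ 2 + ‖v 2‖ ^ 2)
      ≤ Real.sqrt ((|v 0| + |v 1| + |v 2|) ^ 2) := Real.sqrt_le_sqrt h
    _ = |v 0| + |v 1| + |v 2| := Real.sqrt_sq (by positivity)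

lemma sq_bounds {a c : ℝ} (hc : 0 ≤ c) (h : a ^ 2 ≤ c ^ 2) : -c ≤ a ∧ a ≤ c := by
  constructor <;> nlinarith [sq_nonneg (a - c), sq_nonneg (a + c)]

lemma norm_bound_aux (v : EuclideanSpace ℝ (Fin 3)) (c : ℝ) (h0 : |v 0| ≤ 3 * c)
    (h1 : |v 1| ≤ 3 * c) (h2 : |v 2| ≤ c) : ‖v‖ ≤ 7 * c :=
  le_trans (norm_le_abs3 v) (by linarith)

/-! ### Separation lemmas -/

/-- Separation between `U₁` and a cone over a small circle centered at `(t, b t)`. -/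
lemma sep_U1_right {k : ℕ} {p q : EuclideanSpace ℝ (Fin 3)} (b : ℝ) (hb1 : -(1/2) ≤ b)
    (hb2 : b ≤ 1/2) (hp : p ∈ PieceU1 k)
    (hqe : (q 0 - q 2) ^ 2 + (q 1 - b * q 2) ^ 2 = q 2 ^ 2 / 16) (hqt : 0 ≤ q 2) :
    p 2 + q 2 ≤ 300 * ‖p - q‖ := by
  obtain ⟨hpe, hpt⟩ := hp
  have hdnn : (0:ℝ) ≤ ‖p - q‖ := norm_nonneg _
  obtain ⟨h0a, h0b⟩ := abs_le.mp (show |p 0 - q 0| ≤ ‖p - q‖ by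
    simpa [sub3] using abs_coord_le (p - q) 0)
  obtain ⟨h1a, h1b⟩ := abs_le.mp (show |p 1 - q 1| ≤ ‖p - q‖ by
    simpa [sub3] using abs_coord_le (p - q) 1)
  obtain ⟨h2a, h2b⟩ := abs_le.mp (show |p 2 - q 2| ≤ ‖p - q‖ by
    simpa [sub3] using abs_coord_le (p - q) 2)
  have key : q 2 ≤ 100 * ‖p - q‖ := by
    by_contra hcon
    push_neg at hcon
    set d := ‖p - q‖ with hd
    set t := q 2 with hT
    have ht : 0 < t := lt_of_le_of_lt (by positivity) hcon
    have ht2 : 0 < t ^ 2 := by positivity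
    have hd' : d < t / 100 := by linarith
    have hbt1 : -((1/2) * t) ≤ b * t := by nlinarith
    have hbt2 : b * t ≤ (1/2) * t := by nlinarith
    have hA : (q 0 - t) ^ 2 ≤ (t / 4) ^ 2 := by linarith [sq_nonneg (q 1 - b * t)]
    have hB : (q 1 - b * t) ^ 2 ≤ (t / 4) ^ 2 := by linarith [sq_nonneg (q 0 - t)]
    obtain ⟨hA1, hA2⟩ := sq_bounds (by positivity) hA
    obtain ⟨hB1, hB2⟩ := sq_bounds (by positivity) hB
    have hp2l : (99 / 100) * t ≤ p 2 := by linarith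
    have hp2u : p 2 ≤ (101 / 100) * t := by linarith
    have hFa : (p 0 - p 2) ^ 2 ≤ (729 / 10000) * t ^ 2 := by
      calc (p 0 - p 2) ^ 2 ≤ ((27 / 100) * t) ^ 2 :=
            sq_le_sq' (by linarith) (by linarith)
        _ = (729 / 10000) * t ^ 2 := by ring
    have hFb : (p 1) ^ 2 ≤ (5776 / 10000) * t ^ 2 := by
      calc (p 1) ^ 2 ≤ ((76 / 100) * t) ^ 2 := sq_le_sq' (by linarith) (by linarith)
        _ = (5776 / 10000) * t ^ 2 := by ring
    have hFc : (9801 / 10000) * t ^ 2 ≤ (p 2) ^ 2 := by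
      calc (9801 / 10000) * t ^ 2 = ((99 / 100) * t) ^ 2 := by ring
        _ ≤ (p 2) ^ 2 := pow_le_pow_left₀ (by positivity) hp2l 2
    have hF : (p 0 - p 2) ^ 2 + p 1 ^ 2 - p 2 ^ 2 < 0 := by linarith
    have hGa : (29929 / 10000) * t ^ 2 ≤ (p 0 + p 2) ^ 2 := by
      calc (29929 / 10000) * t ^ 2 = ((173 / 100) * t) ^ 2 := by ring
        _ ≤ (p 0 + p 2) ^ 2 := pow_le_pow_left₀ (by positivity) (by linarith) 2
    have hGb : (p 2) ^ 2 ≤ (10201 / 10000) * t ^ 2 := by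
      calc (p 2) ^ 2 ≤ ((101 / 100) * t) ^ 2 := sq_le_sq' (by linarith) (by linarith)
        _ = (10201 / 10000) * t ^ 2 := by ring
    have hG : 0 < (p 0 + p 2) ^ 2 + p 1 ^ 2 - p 2 ^ 2 := by
      linarith [sq_nonneg (p 1)]
    have hneg := mul_neg_of_neg_of_pos hF hG
    rw [hpe] at hneg
    exact absurd hneg (not_lt.mpr (pow_nonneg hpt k))
  linarith

/-- Separation between `U₁` and the cone over the circle centered at `(-t, 0)`. -/
lemma sep_U1_V3 {k : ℕ} {p q : EuclideanSpace ℝ (Fin 3)} (hp : p ∈ PieceU1 k)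
    (hq : q ∈ PieceV3) : p 2 + q 2 ≤ 300 * ‖p - q‖ := by
  obtain ⟨hpe, hpt⟩ := hp
  obtain ⟨hqe, hqt⟩ := hq
  have hdnn : (0:ℝ) ≤ ‖p - q‖ := norm_nonneg _
  obtain ⟨h0a, h0b⟩ := abs_le.mp (show |p 0 - q 0| ≤ ‖p - q‖ by
    simpa [sub3] using abs_coord_le (p - q) 0)
  obtain ⟨h1a, h1b⟩ := abs_le.mp (show |p 1 - q 1| ≤ ‖p - q‖ by
    simpa [sub3] using abs_coord_le (p - q) 1)
  obtain ⟨h2a, h2b⟩ := abs_le.mp (show |p 2 - q 2| ≤ ‖p - q‖ by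
    simpa [sub3] using abs_coord_le (p - q) 2)
  have key : q 2 ≤ 100 * ‖p - q‖ := by
    by_contra hcon
    push_neg at hcon
    set d := ‖p - q‖ with hd
    set t := q 2 with hT
    have ht : 0 < t := lt_of_le_of_lt (by positivity) hcon
    have ht2 : 0 < t ^ 2 := by positivity
    have hd' : d < t / 100 := by linarith
    have hA : (q 0 + t) ^ 2 ≤ (t / 4) ^ 2 := by linarith [sq_nonneg (q 1)]
    have hB : (q 1) ^ 2 ≤ (t / 4) ^ 2 := by linarith [sq_nonneg (q 0 + t)]
    obtain ⟨hA1, hA2⟩ := sq_bounds (by positivity) hA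
    obtain ⟨hB1, hB2⟩ := sq_bounds (by positivity) hB
    have hp2l : (99 / 100) * t ≤ p 2 := by linarith
    have hp2u : p 2 ≤ (101 / 100) * t := by linarith
    have hGa : (p 0 + p 2) ^ 2 ≤ (729 / 10000) * t ^ 2 := by
      calc (p 0 + p 2) ^ 2 ≤ ((27 / 100) * t) ^ 2 :=
            sq_le_sq' (by linarith) (by linarith)
        _ = (729 / 10000) * t ^ 2 := by ring
    have hGb : (p 1) ^ 2 ≤ (2600 / 10000) * t ^ 2 := by
      calc (p 1) ^ 2 ≤ ((26 / 100) * t) ^ 2 := sq_le_sq' (by linarith) (by linarith)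
        _ ≤ (2600 / 10000) * t ^ 2 := by nlinarith
    have hGc : (9801 / 10000) * t ^ 2 ≤ (p 2) ^ 2 := by
      calc (9801 / 10000) * t ^ 2 = ((99 / 100) * t) ^ 2 := by ring
        _ ≤ (p 2) ^ 2 := pow_le_pow_left₀ (by positivity) hp2l 2
    have hG : (p 0 + p 2) ^ 2 + p 1 ^ 2 - p 2 ^ 2 < 0 := by linarith
    have hFa : (29929 / 10000) * t ^ 2 ≤ (p 0 - p 2) ^ 2 := by
      have h1 : p 0 - p 2 ≤ -((173 / 100) * t) := by linarith
      calc (29929 / 10000) * t ^ 2 = ((173 / 100) * t) ^ 2 := by ring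
        _ = (-((173 / 100) * t)) ^ 2 := by ring
        _ ≤ (p 0 - p 2) ^ 2 := by
            have h2 : (0:ℝ) ≤ (173 / 100) * t := by positivity
            nlinarith
    have hFb : (p 2) ^ 2 ≤ (10201 / 10000) * t ^ 2 := by
      calc (p 2) ^ 2 ≤ ((101 / 100) * t) ^ 2 := sq_le_sq' (by linarith) (by linarith)
        _ = (10201 / 10000) * t ^ 2 := by ring
    have hF : 0 < (p 0 - p 2) ^ 2 + p 1 ^ 2 - p 2 ^ 2 := by
      linarith [sq_nonneg (p 1)]
    have hneg := mul_neg_of_pos_of_neg hF hG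
    rw [hpe] at hneg
    exact absurd hneg (not_lt.mpr (pow_nonneg hpt k))
  linarith

lemma sep_U1_U2 {k : ℕ} {p q : EuclideanSpace ℝ (Fin 3)} (hp : p ∈ PieceU1 k)
    (hq : q ∈ PieceU2) : p 2 + q 2 ≤ 300 * ‖p - q‖ := by
  apply sep_U1_right (1/2) (by norm_num) (by norm_num) hp _ hq.2
  linear_combination hq.1

lemma sep_U1_U3 {k : ℕ} {p q : EuclideanSpace ℝ (Fin 3)} (hp : p ∈ PieceU1 k)
    (hq : q ∈ PieceU3) : p 2 + q 2 ≤ 300 * ‖p - q‖ := by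
  apply sep_U1_right (-(1/2)) (by norm_num) (by norm_num) hp _ hq.2
  linear_combination hq.1

lemma sep_U1_V2 {k : ℕ} {p q : EuclideanSpace ℝ (Fin 3)} (hp : p ∈ PieceU1 k)
    (hq : q ∈ PieceV2) : p 2 + q 2 ≤ 300 * ‖p - q‖ := by
  apply sep_U1_right 0 (by norm_num) (by norm_num) hp _ hq.2
  linear_combination hq.1

lemma sep_U2_U3 {p q : EuclideanSpace ℝ (Fin 3)} (hp : p ∈ PieceU2) (hq : q ∈ PieceU3) :
    p 2 + q 2 ≤ 300 * ‖p - q‖ := by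
  obtain ⟨hpe, hpt⟩ := hp
  obtain ⟨hqe, hqt⟩ := hq
  have hdnn : (0:ℝ) ≤ ‖p - q‖ := norm_nonneg _
  obtain ⟨h1a, h1b⟩ := abs_le.mp (show |p 1 - q 1| ≤ ‖p - q‖ by
    simpa [sub3] using abs_coord_le (p - q) 1)
  have hB : (p 1 - p 2 / 2) ^ 2 ≤ (p 2 / 4) ^ 2 := by linarith [sq_nonneg (p 0 - p 2)]
  have hB' : (q 1 + q 2 / 2) ^ 2 ≤ (q 2 / 4) ^ 2 := by linarith [sq_nonneg (q 0 - q 2)]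
  obtain ⟨c1, c2⟩ := sq_bounds (by positivity) hB
  obtain ⟨c3, c4⟩ := sq_bounds (by positivity) hB'
  linarith

lemma sep_V2_V3 {p q : EuclideanSpace ℝ (Fin 3)} (hp : p ∈ PieceV2) (hq : q ∈ PieceV3) :
    p 2 + q 2 ≤ 300 * ‖p - q‖ := by
  obtain ⟨hpe, hpt⟩ := hp
  obtain ⟨hqe, hqt⟩ := hq
  have hdnn : (0:ℝ) ≤ ‖p - q‖ := norm_nonneg _
  obtain ⟨h0a, h0b⟩ := abs_le.mp (show |p 0 - q 0| ≤ ‖p - q‖ by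
    simpa [sub3] using abs_coord_le (p - q) 0)
  have hB : (p 0 - p 2) ^ 2 ≤ (p 2 / 4) ^ 2 := by linarith [sq_nonneg (p 1)]
  have hB' : (q 0 + q 2) ^ 2 ≤ (q 2 / 4) ^ 2 := by linarith [sq_nonneg (q 1)]
  obtain ⟨c1, c2⟩ := sq_bounds (by positivity) hB
  obtain ⟨c3, c4⟩ := sq_bounds (by positivity) hB'
  linarith

/-! ### Intersections of pieces are trivial -/

lemma U1_U2_t0 {k : ℕ} {p : EuclideanSpace ℝ (Fin 3)} (h1 : p ∈ PieceU1 k)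
    (h2 : p ∈ PieceU2) : p 2 = 0 := by
  have h := sep_U1_U2 h1 h2
  rw [sub_self, norm_zero] at h
  linarith [h1.2]

lemma U1_U3_t0 {k : ℕ} {p : EuclideanSpace ℝ (Fin 3)} (h1 : p ∈ PieceU1 k)
    (h2 : p ∈ PieceU3) : p 2 = 0 := by
  have h := sep_U1_U3 h1 h2
  rw [sub_self, norm_zero] at h
  linarith [h1.2]

lemma U1_V2_t0 {k : ℕ} {p : EuclideanSpace ℝ (Fin 3)} (h1 : p ∈ PieceU1 k)
    (h2 : p ∈ PieceV2) : p 2 = 0 := by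
  have h := sep_U1_V2 h1 h2
  rw [sub_self, norm_zero] at h
  linarith [h1.2]

lemma U1_V3_t0 {k : ℕ} {p : EuclideanSpace ℝ (Fin 3)} (h1 : p ∈ PieceU1 k)
    (h2 : p ∈ PieceV3) : p 2 = 0 := by
  have h := sep_U1_V3 h1 h2
  rw [sub_self, norm_zero] at h
  linarith [h1.2]

lemma U2_U3_t0 {p : EuclideanSpace ℝ (Fin 3)} (h1 : p ∈ PieceU2) (h2 : p ∈ PieceU3) :
    p 2 = 0 := by
  have h := sep_U2_U3 h1 h2
  rw [sub_self, norm_zero] at h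
  linarith [h1.2]

lemma V2_V3_t0 {p : EuclideanSpace ℝ (Fin 3)} (h1 : p ∈ PieceV2) (h2 : p ∈ PieceV3) :
    p 2 = 0 := by
  have h := sep_V2_V3 h1 h2
  rw [sub_self, norm_zero] at h
  linarith [h1.2]

/-! ### Pieces at `t = 0` contain only the origin -/

lemma U1_zero {k : ℕ} (hk : k ≠ 0) {p : EuclideanSpace ℝ (Fin 3)} (hp : p ∈ PieceU1 k)
    (ht : p 2 = 0) : p = 0 := by
  obtain ⟨he, -⟩ := hp
  rw [ht] at he
  have h0k : (0:ℝ) ^ k = 0 := zero_pow hk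
  rw [h0k] at he
  have hss : (p 0 ^ 2 + p 1 ^ 2) ^ 2 = 0 := by linear_combination he
  have hA : p 0 ^ 2 + p 1 ^ 2 = 0 := by
    have := sq_nonneg (p 0 ^ 2 + p 1 ^ 2)
    nlinarith [sq_nonneg (p 0), sq_nonneg (p 1)]
  have h0 : p 0 = 0 := by nlinarith [sq_nonneg (p 0), sq_nonneg (p 1)]
  have h1 : p 1 = 0 := by nlinarith [sq_nonneg (p 0), sq_nonneg (p 1)]
  exact ext3 h0 h1 ht

lemma U2_zero {p : EuclideanSpace ℝ (Fin 3)} (hp : p ∈ PieceU2) (ht : p 2 = 0) : p = 0 := by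
  obtain ⟨he, -⟩ := hp
  rw [ht] at he
  have h0 : p 0 = 0 := by nlinarith [sq_nonneg (p 0), sq_nonneg (p 1)]
  have h1 : p 1 = 0 := by nlinarith [sq_nonneg (p 0), sq_nonneg (p 1)]
  exact ext3 h0 h1 ht

lemma U3_zero {p : EuclideanSpace ℝ (Fin 3)} (hp : p ∈ PieceU3) (ht : p 2 = 0) : p = 0 := by
  obtain ⟨he, -⟩ := hp
  rw [ht] at he
  have h0 : p 0 = 0 := by nlinarith [sq_nonneg (p 0), sq_nonneg (p 1)]
  have h1 : p 1 = 0 := by nlinarith [sq_nonneg (p 0), sq_nonneg (p 1)]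
  exact ext3 h0 h1 ht

/-! ### The map `φ` -/

open Classical in
def phi (p : EuclideanSpace ℝ (Fin 3)) : EuclideanSpace ℝ (Fin 3) :=
  if (p 0 - p 2) ^ 2 + (p 1 - p 2 / 2) ^ 2 = p 2 ^ 2 / 16 ∧ 0 < p 2 then
    mk3 (p 0) (p 1 - p 2 / 2) (p 2)
  else if (p 0 - p 2) ^ 2 + (p 1 + p 2 / 2) ^ 2 = p 2 ^ 2 / 16 ∧ 0 < p 2 then
    mk3 (p 0 - 2 * p 2) (p 1 + p 2 / 2) (p 2)
  else p

lemma phi_two (p : EuclideanSpace ℝ (Fin 3)) : phi p 2 = p 2 := by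
  unfold phi
  split_ifs <;> simp

lemma phi_coords_U2 {p : EuclideanSpace ℝ (Fin 3)} (hp : p ∈ PieceU2) :
    phi p 0 = p 0 ∧ phi p 1 = p 1 - p 2 / 2 ∧ phi p 2 = p 2 := by
  rcases eq_or_lt_of_le hp.2 with h0 | ht
  · have ht : p 2 = 0 := h0.symm
    have hzero : p = 0 := U2_zero hp ht
    have : phi p = p := by
      unfold phi
      rw [if_neg (by rintro ⟨-, hlt⟩; rw [ht] at hlt; exact lt_irrefl 0 hlt),
        if_neg (by rintro ⟨-, hlt⟩; rw [ht] at hlt; exact lt_irrefl 0 hlt)]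
    rw [this, ht]
    norm_num
  · have : phi p = mk3 (p 0) (p 1 - p 2 / 2) (p 2) := by
      unfold phi
      rw [if_pos ⟨hp.1, ht⟩]
    rw [this]
    simp

lemma phi_coords_U3 {p : EuclideanSpace ℝ (Fin 3)} (hp : p ∈ PieceU3) :
    phi p 0 = p 0 - 2 * p 2 ∧ phi p 1 = p 1 + p 2 / 2 ∧ phi p 2 = p 2 := by
  rcases eq_or_lt_of_le hp.2 with h0 | ht
  · have ht : p 2 = 0 := h0.symm
    have hzero : p = 0 := U3_zero hp ht
    have : phi p = p := by
      unfold phi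
      rw [if_neg (by rintro ⟨-, hlt⟩; rw [ht] at hlt; exact lt_irrefl 0 hlt),
        if_neg (by rintro ⟨-, hlt⟩; rw [ht] at hlt; exact lt_irrefl 0 hlt)]
    rw [this, ht]
    norm_num
  · have hn2 : ¬((p 0 - p 2) ^ 2 + (p 1 - p 2 / 2) ^ 2 = p 2 ^ 2 / 16 ∧ 0 < p 2) := by
      rintro ⟨hc2, -⟩
      have := U2_U3_t0 ⟨hc2, hp.2⟩ hp
      rw [this] at ht
      exact lt_irrefl 0 ht
    have : phi p = mk3 (p 0 - 2 * p 2) (p 1 + p 2 / 2) (p 2) := by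
      unfold phi
      rw [if_neg hn2, if_pos ⟨hp.1, ht⟩]
    rw [this]
    simp

lemma phi_of_U1 {k : ℕ} {p : EuclideanSpace ℝ (Fin 3)} (hp : p ∈ PieceU1 k) :
    phi p = p := by
  unfold phi
  rw [if_neg, if_neg]
  · rintro ⟨hc3, hlt⟩
    have := U1_U3_t0 hp ⟨hc3, le_of_lt hlt⟩
    rw [this] at hlt
    exact lt_irrefl 0 hlt
  · rintro ⟨hc2, hlt⟩
    have := U1_U2_t0 hp ⟨hc2, le_of_lt hlt⟩
    rw [this] at hlt
    exact lt_irrefl 0 hlt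

lemma phi_mem_V2 {p : EuclideanSpace ℝ (Fin 3)} (hp : p ∈ PieceU2) : phi p ∈ PieceV2 := by
  obtain ⟨c0, c1, c2⟩ := phi_coords_U2 hp
  constructor
  · rw [c0, c1, c2]
    linear_combination hp.1
  · rw [c2]; exact hp.2

lemma phi_mem_V3 {p : EuclideanSpace ℝ (Fin 3)} (hp : p ∈ PieceU3) : phi p ∈ PieceV3 := by
  obtain ⟨c0, c1, c2⟩ := phi_coords_U3 hp
  constructor
  · rw [c0, c1, c2]
    linear_combination hp.1
  · rw [c2]; exact hp.2

/-! ### Norm bounds on the pieces -/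

lemma normU1 {k : ℕ} (hk : 4 ≤ k) {p : EuclideanSpace ℝ (Fin 3)} (hp : p ∈ PieceU1 k)
    (h1 : p 2 ≤ 1) : ‖p‖ ≤ 7 * p 2 := by
  obtain ⟨he, ht⟩ := hp
  have hk4 : p 2 ^ k ≤ p 2 ^ 4 := pow_le_pow_of_le_one ht h1 hk
  have h4 : (p 0 ^ 2 + p 1 ^ 2) ^ 2 ≤ p 2 ^ 4 + 4 * (p 0 ^ 2 + p 1 ^ 2) * p 2 ^ 2 := by
    nlinarith [mul_nonneg (sq_nonneg (p 1)) (sq_nonneg (p 2))]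
  have hprod : (p 0 ^ 2 + p 1 ^ 2 - 5 * p 2 ^ 2) * ((p 0 ^ 2 + p 1 ^ 2) + p 2 ^ 2) ≤
      -(4:ℝ) * p 2 ^ 4 := by nlinarith [h4]
  have hs : p 0 ^ 2 + p 1 ^ 2 ≤ 5 * p 2 ^ 2 := by
    nlinarith [hprod, sq_nonneg (p 2), sq_nonneg (p 2 ^ 2)]
  have h5 : p 0 ^ 2 ≤ (3 * p 2) ^ 2 := by nlinarith [sq_nonneg (p 1), sq_nonneg (p 2)]
  have h6 : p 1 ^ 2 ≤ (3 * p 2) ^ 2 := by nlinarith [sq_nonneg (p 0), sq_nonneg (p 2)]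
  obtain ⟨a1, a2⟩ := sq_bounds (by linarith) h5
  obtain ⟨b1, b2⟩ := sq_bounds (by linarith) h6
  exact norm_bound_aux p (p 2) (abs_le.mpr ⟨a1, a2⟩) (abs_le.mpr ⟨b1, b2⟩)
    (by rw [abs_of_nonneg ht])

lemma normU2 {p : EuclideanSpace ℝ (Fin 3)} (hp : p ∈ PieceU2) : ‖p‖ ≤ 7 * p 2 := by
  obtain ⟨he, ht⟩ := hp
  have hA : (p 0 - p 2) ^ 2 ≤ (p 2 / 4) ^ 2 := by linarith [sq_nonneg (p 1 - p 2 / 2)]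
  have hB : (p 1 - p 2 / 2) ^ 2 ≤ (p 2 / 4) ^ 2 := by linarith [sq_nonneg (p 0 - p 2)]
  obtain ⟨a1, a2⟩ := sq_bounds (by positivity) hA
  obtain ⟨b1, b2⟩ := sq_bounds (by positivity) hB
  exact norm_bound_aux p (p 2) (abs_le.mpr ⟨by linarith, by linarith⟩)
    (abs_le.mpr ⟨by linarith, by linarith⟩) (by rw [abs_of_nonneg ht])

lemma normU3 {p : EuclideanSpace ℝ (Fin 3)} (hp : p ∈ PieceU3) : ‖p‖ ≤ 7 * p 2 := by
  obtain ⟨he, ht⟩ := hp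
  have hA : (p 0 - p 2) ^ 2 ≤ (p 2 / 4) ^ 2 := by linarith [sq_nonneg (p 1 + p 2 / 2)]
  have hB : (p 1 + p 2 / 2) ^ 2 ≤ (p 2 / 4) ^ 2 := by linarith [sq_nonneg (p 0 - p 2)]
  obtain ⟨a1, a2⟩ := sq_bounds (by positivity) hA
  obtain ⟨b1, b2⟩ := sq_bounds (by positivity) hB
  exact norm_bound_aux p (p 2) (abs_le.mpr ⟨by linarith, by linarith⟩)
    (abs_le.mpr ⟨by linarith, by linarith⟩) (by rw [abs_of_nonneg ht])

lemma normV2 {p : EuclideanSpace ℝ (Fin 3)} (hp : p ∈ PieceV2) : ‖p‖ ≤ 7 * p 2 := by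
  obtain ⟨he, ht⟩ := hp
  have hA : (p 0 - p 2) ^ 2 ≤ (p 2 / 4) ^ 2 := by linarith [sq_nonneg (p 1)]
  have hB : (p 1) ^ 2 ≤ (p 2 / 4) ^ 2 := by linarith [sq_nonneg (p 0 - p 2)]
  obtain ⟨a1, a2⟩ := sq_bounds (by positivity) hA
  obtain ⟨b1, b2⟩ := sq_bounds (by positivity) hB
  exact norm_bound_aux p (p 2) (abs_le.mpr ⟨by linarith, by linarith⟩)
    (abs_le.mpr ⟨by linarith, by linarith⟩) (by rw [abs_of_nonneg ht])

lemma normV3 {p : EuclideanSpace ℝ (Fin 3)} (hp : p ∈ PieceV3) : ‖p‖ ≤ 7 * p 2 := by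
  obtain ⟨he, ht⟩ := hp
  have hA : (p 0 + p 2) ^ 2 ≤ (p 2 / 4) ^ 2 := by linarith [sq_nonneg (p 1)]
  have hB : (p 1) ^ 2 ≤ (p 2 / 4) ^ 2 := by linarith [sq_nonneg (p 0 + p 2)]
  obtain ⟨a1, a2⟩ := sq_bounds (by positivity) hA
  obtain ⟨b1, b2⟩ := sq_bounds (by positivity) hB
  exact norm_bound_aux p (p 2) (abs_le.mpr ⟨by linarith, by linarith⟩)
    (abs_le.mpr ⟨by linarith, by linarith⟩) (by rw [abs_of_nonneg ht])

/-! ### Decomposition of `X₁` and `X₂` into pieces -/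

lemma X1_cases {k : ℕ} {p : EuclideanSpace ℝ (Fin 3)} (hp : p ∈ ExampleX1 k) :
    p ∈ PieceU1 k ∨ p ∈ PieceU2 ∨ p ∈ PieceU3 := by
  obtain ⟨he, ht⟩ := hp
  rcases mul_eq_zero.mp he with h | h3
  · rcases mul_eq_zero.mp h with h1 | h2
    · exact Or.inl ⟨by linear_combination h1, ht⟩
    · exact Or.inr (Or.inl ⟨by linear_combination h2, ht⟩)
  · exact Or.inr (Or.inr ⟨by linear_combination h3, ht⟩)

lemma X2_cases {k : ℕ} {p : EuclideanSpace ℝ (Fin 3)} (hp : p ∈ ExampleX2 k) :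
    p ∈ PieceU1 k ∨ p ∈ PieceV2 ∨ p ∈ PieceV3 := by
  obtain ⟨he, ht⟩ := hp
  rcases mul_eq_zero.mp he with h | h3
  · rcases mul_eq_zero.mp h with h1 | h2
    · exact Or.inl ⟨by linear_combination h1, ht⟩
    · exact Or.inr (Or.inl ⟨by linear_combination h2, ht⟩)
  · exact Or.inr (Or.inr ⟨by linear_combination h3, ht⟩)

lemma U1_sub_X1 {k : ℕ} {p : EuclideanSpace ℝ (Fin 3)} (hp : p ∈ PieceU1 k) :
    p ∈ ExampleX1 k :=
  ⟨by linear_combination (((p 0 - p 2) ^ 2 + (p 1 - p 2 / 2) ^ 2 - p 2 ^ 2 / 16) *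
      ((p 0 - p 2) ^ 2 + (p 1 + p 2 / 2) ^ 2 - p 2 ^ 2 / 16)) * hp.1, hp.2⟩

lemma U2_sub_X1 {k : ℕ} {p : EuclideanSpace ℝ (Fin 3)} (hp : p ∈ PieceU2) :
    p ∈ ExampleX1 k :=
  ⟨by linear_combination (((p 0 ^ 2 - 2 * p 0 * p 2 + p 1 ^ 2) *
      (p 0 ^ 2 + 2 * p 0 * p 2 + p 1 ^ 2) - p 2 ^ k) *
      ((p 0 - p 2) ^ 2 + (p 1 + p 2 / 2) ^ 2 - p 2 ^ 2 / 16)) * hp.1, hp.2⟩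

lemma U3_sub_X1 {k : ℕ} {p : EuclideanSpace ℝ (Fin 3)} (hp : p ∈ PieceU3) :
    p ∈ ExampleX1 k :=
  ⟨by linear_combination (((p 0 ^ 2 - 2 * p 0 * p 2 + p 1 ^ 2) *
      (p 0 ^ 2 + 2 * p 0 * p 2 + p 1 ^ 2) - p 2 ^ k) *
      ((p 0 - p 2) ^ 2 + (p 1 - p 2 / 2) ^ 2 - p 2 ^ 2 / 16)) * hp.1, hp.2⟩

lemma U1_sub_X2 {k : ℕ} {p : EuclideanSpace ℝ (Fin 3)} (hp : p ∈ PieceU1 k) :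
    p ∈ ExampleX2 k :=
  ⟨by linear_combination (((p 0 - p 2) ^ 2 + p 1 ^ 2 - p 2 ^ 2 / 16) *
      ((p 0 + p 2) ^ 2 + p 1 ^ 2 - p 2 ^ 2 / 16)) * hp.1, hp.2⟩

lemma V2_sub_X2 {k : ℕ} {p : EuclideanSpace ℝ (Fin 3)} (hp : p ∈ PieceV2) :
    p ∈ ExampleX2 k :=
  ⟨by linear_combination (((p 0 ^ 2 - 2 * p 0 * p 2 + p 1 ^ 2) *
      (p 0 ^ 2 + 2 * p 0 * p 2 + p 1 ^ 2) - p 2 ^ k) *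
      ((p 0 + p 2) ^ 2 + p 1 ^ 2 - p 2 ^ 2 / 16)) * hp.1, hp.2⟩

lemma V3_sub_X2 {k : ℕ} {p : EuclideanSpace ℝ (Fin 3)} (hp : p ∈ PieceV3) :
    p ∈ ExampleX2 k :=
  ⟨by linear_combination (((p 0 ^ 2 - 2 * p 0 * p 2 + p 1 ^ 2) *
      (p 0 ^ 2 + 2 * p 0 * p 2 + p 1 ^ 2) - p 2 ^ k) *
      ((p 0 - p 2) ^ 2 + p 1 ^ 2 - p 2 ^ 2 / 16)) * hp.1, hp.2⟩


/-! ### Bi-Lipschitz estimates, case by case -/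

lemma abs_sub3 (a b : ℝ) : |a - b| ≤ |a| + |b| := by
  rw [sub_eq_add_neg]
  exact (abs_add_le a (-b)).trans (by rw [abs_neg])

lemma abs_shift (a b : ℝ) : |a| ≤ |a - b| + |b| := by
  simpa using abs_add_le (a - b) b

lemma key11 {k : ℕ} {p q : EuclideanSpace ℝ (Fin 3)} (hp : p ∈ PieceU1 k)
    (hq : q ∈ PieceU1 k) :
    ‖phi p - phi q‖ ≤ 2100 * ‖p - q‖ ∧ ‖p - q‖ ≤ 2100 * ‖phi p - phi q‖ := by
  rw [phi_of_U1 hp, phi_of_U1 hq]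
  constructor <;> linarith [norm_nonneg (p - q)]

lemma key22 {p q : EuclideanSpace ℝ (Fin 3)} (hp : p ∈ PieceU2) (hq : q ∈ PieceU2) :
    ‖phi p - phi q‖ ≤ 2100 * ‖p - q‖ ∧ ‖p - q‖ ≤ 2100 * ‖phi p - phi q‖ := by
  obtain ⟨cp0, cp1, cp2⟩ := phi_coords_U2 hp
  obtain ⟨cq0, cq1, cq2⟩ := phi_coords_U2 hq
  have w0 : (phi p - phi q) 0 = p 0 - q 0 := by rw [sub3, cp0, cq0]
  have w1 : (phi p - phi q) 1 = (p 1 - q 1) - (p 2 - q 2) / 2 := by rw [sub3, cp1, cq1]; ring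
  have w2 : (phi p - phi q) 2 = p 2 - q 2 := by rw [sub3, cp2, cq2]
  have d0 : |p 0 - q 0| ≤ ‖p - q‖ := by simpa [sub3] using abs_coord_le (p - q) 0
  have d1 : |p 1 - q 1| ≤ ‖p - q‖ := by simpa [sub3] using abs_coord_le (p - q) 1
  have d2 : |p 2 - q 2| ≤ ‖p - q‖ := by simpa [sub3] using abs_coord_le (p - q) 2
  have e0 : |p 0 - q 0| ≤ ‖phi p - phi q‖ := by
    have := abs_coord_le (phi p - phi q) 0; rwa [w0] at this
  have e1 : |(p 1 - q 1) - (p 2 - q 2) / 2| ≤ ‖phi p - phi q‖ := by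
    have := abs_coord_le (phi p - phi q) 1; rwa [w1] at this
  have e2 : |p 2 - q 2| ≤ ‖phi p - phi q‖ := by
    have := abs_coord_le (phi p - phi q) 2; rwa [w2] at this
  have hhalf : |(p 2 - q 2) / 2| ≤ |p 2 - q 2| := by
    rw [abs_div, abs_two]; linarith [abs_nonneg (p 2 - q 2)]
  constructor
  · have hn := norm_le_abs3 (phi p - phi q)
    rw [w0, w1, w2] at hn
    have t1 := abs_sub3 (p 1 - q 1) ((p 2 - q 2) / 2)
    linarith
  · have hn := norm_le_abs3 (p - q)
    rw [sub3, sub3, sub3] at hn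
    have t1 := abs_shift (p 1 - q 1) ((p 2 - q 2) / 2)
    linarith

lemma key33 {p q : EuclideanSpace ℝ (Fin 3)} (hp : p ∈ PieceU3) (hq : q ∈ PieceU3) :
    ‖phi p - phi q‖ ≤ 2100 * ‖p - q‖ ∧ ‖p - q‖ ≤ 2100 * ‖phi p - phi q‖ := by
  obtain ⟨cp0, cp1, cp2⟩ := phi_coords_U3 hp
  obtain ⟨cq0, cq1, cq2⟩ := phi_coords_U3 hq
  have w0 : (phi p - phi q) 0 = (p 0 - q 0) - 2 * (p 2 - q 2) := by
    rw [sub3, cp0, cq0]; ring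
  have w1 : (phi p - phi q) 1 = (p 1 - q 1) - (-((p 2 - q 2) / 2)) := by
    rw [sub3, cp1, cq1]; ring
  have w2 : (phi p - phi q) 2 = p 2 - q 2 := by rw [sub3, cp2, cq2]
  have d0 : |p 0 - q 0| ≤ ‖p - q‖ := by simpa [sub3] using abs_coord_le (p - q) 0
  have d1 : |p 1 - q 1| ≤ ‖p - q‖ := by simpa [sub3] using abs_coord_le (p - q) 1
  have d2 : |p 2 - q 2| ≤ ‖p - q‖ := by simpa [sub3] using abs_coord_le (p - q) 2
  have e0 : |(p 0 - q 0) - 2 * (p 2 - q 2)| ≤ ‖phi p - phi q‖ := by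
    have := abs_coord_le (phi p - phi q) 0; rwa [w0] at this
  have e1 : |(p 1 - q 1) - (-((p 2 - q 2) / 2))| ≤ ‖phi p - phi q‖ := by
    have := abs_coord_le (phi p - phi q) 1; rwa [w1] at this
  have e2 : |p 2 - q 2| ≤ ‖phi p - phi q‖ := by
    have := abs_coord_le (phi p - phi q) 2; rwa [w2] at this
  have hhalf : |-((p 2 - q 2) / 2)| ≤ |p 2 - q 2| := by
    rw [abs_neg, abs_div, abs_two]; linarith [abs_nonneg (p 2 - q 2)]
  have htwice : |2 * (p 2 - q 2)| = 2 * |p 2 - q 2| := by rw [abs_mul, abs_two]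
  constructor
  · have hn := norm_le_abs3 (phi p - phi q)
    rw [w0, w1, w2] at hn
    have t0 := abs_sub3 (p 0 - q 0) (2 * (p 2 - q 2))
    have t1 := abs_sub3 (p 1 - q 1) (-((p 2 - q 2) / 2))
    linarith
  · have hn := norm_le_abs3 (p - q)
    rw [sub3, sub3, sub3] at hn
    have t0 := abs_shift (p 0 - q 0) (2 * (p 2 - q 2))
    have t1 := abs_shift (p 1 - q 1) (-((p 2 - q 2) / 2))
    linarith

lemma key23 {p q : EuclideanSpace ℝ (Fin 3)} (hp : p ∈ PieceU2) (hq : q ∈ PieceU3) :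
    ‖phi p - phi q‖ ≤ 2100 * ‖p - q‖ ∧ ‖p - q‖ ≤ 2100 * ‖phi p - phi q‖ := by
  have h2 := phi_mem_V2 hp
  have h3 := phi_mem_V3 hq
  have s1 := sep_U2_U3 hp hq
  have s2 := sep_V2_V3 h2 h3
  rw [phi_two p, phi_two q] at s2
  have n1 := normU2 hp
  have n2 := normU3 hq
  have n3 := normV2 h2
  have n4 := normV3 h3
  rw [phi_two p] at n3
  rw [phi_two q] at n4
  constructor
  · calc ‖phi p - phi q‖ ≤ ‖phi p‖ + ‖phi q‖ := norm_sub_le _ _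
      _ ≤ 2100 * ‖p - q‖ := by linarith
  · calc ‖p - q‖ ≤ ‖p‖ + ‖q‖ := norm_sub_le _ _
      _ ≤ 2100 * ‖phi p - phi q‖ := by linarith

lemma key12 {k : ℕ} (hk4 : 4 ≤ k) {p q : EuclideanSpace ℝ (Fin 3)} (hp : p ∈ PieceU1 k)
    (hq : q ∈ PieceU2) (hp1 : p 2 ≤ 1) :
    ‖phi p - phi q‖ ≤ 2100 * ‖p - q‖ ∧ ‖p - q‖ ≤ 2100 * ‖phi p - phi q‖ := by
  have hid : phi p = p := phi_of_U1 hp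
  have h2 := phi_mem_V2 hq
  have s1 := sep_U1_U2 hp hq
  have s2 := sep_U1_V2 hp h2
  rw [phi_two q] at s2
  have n1 := normU1 hk4 hp hp1
  have n2 := normU2 hq
  have n3 := normV2 h2
  rw [phi_two q] at n3
  rw [hid]
  constructor
  · calc ‖p - phi q‖ ≤ ‖p‖ + ‖phi q‖ := norm_sub_le _ _
      _ ≤ 2100 * ‖p - q‖ := by linarith
  · calc ‖p - q‖ ≤ ‖p‖ + ‖q‖ := norm_sub_le _ _
      _ ≤ 2100 * ‖p - phi q‖ := by linarith

lemma key13 {k : ℕ} (hk4 : 4 ≤ k) {p q : EuclideanSpace ℝ (Fin 3)} (hp : p ∈ PieceU1 k)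
    (hq : q ∈ PieceU3) (hp1 : p 2 ≤ 1) :
    ‖phi p - phi q‖ ≤ 2100 * ‖p - q‖ ∧ ‖p - q‖ ≤ 2100 * ‖phi p - phi q‖ := by
  have hid : phi p = p := phi_of_U1 hp
  have h3 := phi_mem_V3 hq
  have s1 := sep_U1_U3 hp hq
  have s2 := sep_U1_V3 hp h3
  rw [phi_two q] at s2
  have n1 := normU1 hk4 hp hp1
  have n2 := normU3 hq
  have n3 := normV3 h3
  rw [phi_two q] at n3
  rw [hid]
  constructor
  · calc ‖p - phi q‖ ≤ ‖p‖ + ‖phi q‖ := norm_sub_le _ _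
      _ ≤ 2100 * ‖p - q‖ := by linarith
  · calc ‖p - q‖ ≤ ‖p‖ + ‖q‖ := norm_sub_le _ _
      _ ≤ 2100 * ‖p - phi q‖ := by linarith

lemma keyAll {k : ℕ} (hk4 : 4 ≤ k) {p q : EuclideanSpace ℝ (Fin 3)}
    (hp : p ∈ PieceU1 k ∨ p ∈ PieceU2 ∨ p ∈ PieceU3)
    (hq : q ∈ PieceU1 k ∨ q ∈ PieceU2 ∨ q ∈ PieceU3)
    (hp1 : p 2 ≤ 1) (hq1 : q 2 ≤ 1) :
    ‖phi p - phi q‖ ≤ 2100 * ‖p - q‖ ∧ ‖p - q‖ ≤ 2100 * ‖phi p - phi q‖ := by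
  have symm : ∀ {a b : EuclideanSpace ℝ (Fin 3)},
      (‖phi a - phi b‖ ≤ 2100 * ‖a - b‖ ∧ ‖a - b‖ ≤ 2100 * ‖phi a - phi b‖) →
      (‖phi b - phi a‖ ≤ 2100 * ‖b - a‖ ∧ ‖b - a‖ ≤ 2100 * ‖phi b - phi a‖) := by
    intro a b h
    rw [norm_sub_rev (phi b) (phi a), norm_sub_rev b a]
    exact h
  rcases hp with h1 | h2 | h3 <;> rcases hq with g1 | g2 | g3
  · exact key11 h1 g1
  · exact key12 hk4 h1 g2 hp1
  · exact key13 hk4 h1 g3 hp1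
  · exact symm (key12 hk4 g1 h2 hq1)
  · exact key22 h2 g2
  · exact key23 h2 g3
  · exact symm (key13 hk4 g1 h3 hq1)
  · exact symm (key23 g2 h3)
  · exact key33 h3 g3

/-- the piecewise map `φ` (identity on `U₁`, `(x,y,t) ↦ (x, y - t/2, t)` on
`U₂`, `(x,y,t) ↦ (x - 2t, y + t/2, t)` on `U₃`) is, for some `ε > 0`, a well-defined
bijection from `X₁ ∩ {0 ≤ t ≤ ε}` onto `X₂ ∩ {0 ≤ t ≤ ε}` which is bi-Lipschitz with some
constant `λ ≥ 1` for the outer metric. -/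
theorem example1_phi_biLipschitz (k : ℕ) (hk : 4 < k) :
    ∃ ε > (0 : ℝ), ∃ lam : ℝ, 1 ≤ lam ∧
      ∃ φ : EuclideanSpace ℝ (Fin 3) → EuclideanSpace ℝ (Fin 3),
        (∀ p ∈ PieceU1 k ∩ {p | 0 ≤ p 2 ∧ p 2 ≤ ε}, φ p = p) ∧
        (∀ p ∈ PieceU2 ∩ {p | 0 ≤ p 2 ∧ p 2 ≤ ε},
          φ p 0 = p 0 ∧ φ p 1 = p 1 - p 2 / 2 ∧ φ p 2 = p 2) ∧
        (∀ p ∈ PieceU3 ∩ {p | 0 ≤ p 2 ∧ p 2 ≤ ε},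
          φ p 0 = p 0 - 2 * p 2 ∧ φ p 1 = p 1 + p 2 / 2 ∧ φ p 2 = p 2) ∧
        Set.BijOn φ (ExampleX1 k ∩ {p | 0 ≤ p 2 ∧ p 2 ≤ ε})
          (ExampleX2 k ∩ {p | 0 ≤ p 2 ∧ p 2 ≤ ε}) ∧
        (∀ p ∈ ExampleX1 k ∩ {p | 0 ≤ p 2 ∧ p 2 ≤ ε},
          ∀ q ∈ ExampleX1 k ∩ {p | 0 ≤ p 2 ∧ p 2 ≤ ε},
            lam⁻¹ * ‖p - q‖ ≤ ‖φ p - φ q‖ ∧ ‖φ p - φ q‖ ≤ lam * ‖p - q‖) := by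
  have hk0 : k ≠ 0 := by omega
  refine ⟨1, one_pos, 2100, by norm_num, phi, ?_, ?_, ?_, ⟨?_, ?_, ?_⟩, ?_⟩
  · intro p hp
    exact phi_of_U1 hp.1
  · intro p hp
    exact phi_coords_U2 hp.1
  · intro p hp
    exact phi_coords_U3 hp.1
  · -- MapsTo
    rintro p ⟨hpX, hpS⟩
    rcases X1_cases hpX with h1 | h2 | h3
    · rw [phi_of_U1 h1]
      exact ⟨U1_sub_X2 h1, hpS⟩
    · exact ⟨V2_sub_X2 (phi_mem_V2 h2),
        ⟨by rw [phi_two]; exact hpS.1, by rw [phi_two]; exact hpS.2⟩⟩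
    · exact ⟨V3_sub_X2 (phi_mem_V3 h3),
        ⟨by rw [phi_two]; exact hpS.1, by rw [phi_two]; exact hpS.2⟩⟩
  · -- InjOn
    rintro p hp q hq heq
    have htEq : p 2 = q 2 := by rw [← phi_two p, heq, phi_two]
    rcases X1_cases hp.1 with h1 | h2 | h3 <;> rcases X1_cases hq.1 with g1 | g2 | g3
    · rw [phi_of_U1 h1, phi_of_U1 g1] at heq
      exact heq
    · have hpq : p = phi q := (phi_of_U1 h1).symm.trans heq
      have hv : p ∈ PieceV2 := by rw [hpq]; exact phi_mem_V2 g2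
      have htp : p 2 = 0 := U1_V2_t0 h1 hv
      have htq : q 2 = 0 := by rw [← htEq]; exact htp
      rw [U1_zero hk0 h1 htp, U2_zero g2 htq]
    · have hpq : p = phi q := (phi_of_U1 h1).symm.trans heq
      have hv : p ∈ PieceV3 := by rw [hpq]; exact phi_mem_V3 g3
      have htp : p 2 = 0 := U1_V3_t0 h1 hv
      have htq : q 2 = 0 := by rw [← htEq]; exact htp
      rw [U1_zero hk0 h1 htp, U3_zero g3 htq]
    · have hqp : q = phi p := (phi_of_U1 g1).symm.trans heq.symm
      have hv : q ∈ PieceV2 := by rw [hqp]; exact phi_mem_V2 h2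
      have htq : q 2 = 0 := U1_V2_t0 g1 hv
      have htp : p 2 = 0 := by rw [htEq]; exact htq
      rw [U2_zero h2 htp, U1_zero hk0 g1 htq]
    · obtain ⟨cp0, cp1, cp2⟩ := phi_coords_U2 h2
      obtain ⟨cq0, cq1, cq2⟩ := phi_coords_U2 g2
      have t0 : p 0 = q 0 := by rw [← cp0, ← cq0, heq]
      have t1 : p 1 - p 2 / 2 = q 1 - q 2 / 2 := by rw [← cp1, ← cq1, heq]
      exact ext3 t0 (by linarith) htEq
    · have hv3 : phi p ∈ PieceV3 := by rw [heq]; exact phi_mem_V3 g3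
      have h0 : phi p 2 = 0 := V2_V3_t0 (phi_mem_V2 h2) hv3
      rw [phi_two] at h0
      have htq : q 2 = 0 := by rw [← htEq]; exact h0
      rw [U2_zero h2 h0, U3_zero g3 htq]
    · have hqp : q = phi p := (phi_of_U1 g1).symm.trans heq.symm
      have hv : q ∈ PieceV3 := by rw [hqp]; exact phi_mem_V3 h3
      have htq : q 2 = 0 := U1_V3_t0 g1 hv
      have htp : p 2 = 0 := by rw [htEq]; exact htq
      rw [U3_zero h3 htp, U1_zero hk0 g1 htq]
    · have hv2 : phi q ∈ PieceV3 := by rw [← heq]; exact phi_mem_V3 h3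
      have h0 : phi q 2 = 0 := V2_V3_t0 (phi_mem_V2 g2) hv2
      rw [phi_two] at h0
      have htp : p 2 = 0 := by rw [htEq]; exact h0
      rw [U3_zero h3 htp, U2_zero g2 h0]
    · obtain ⟨cp0, cp1, cp2⟩ := phi_coords_U3 h3
      obtain ⟨cq0, cq1, cq2⟩ := phi_coords_U3 g3
      have t0 : p 0 - 2 * p 2 = q 0 - 2 * q 2 := by rw [← cp0, ← cq0, heq]
      have t1 : p 1 + p 2 / 2 = q 1 + q 2 / 2 := by rw [← cp1, ← cq1, heq]
      exact ext3 (by linarith) (by linarith) htEq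
  · -- SurjOn
    rintro q ⟨hqX, hqS⟩
    rcases X2_cases hqX with h1 | h2 | h3
    · exact ⟨q, ⟨U1_sub_X1 h1, hqS⟩, phi_of_U1 h1⟩
    · have hpU2 : mk3 (q 0) (q 1 + q 2 / 2) (q 2) ∈ PieceU2 := by
        constructor
        · simp only [mk3_0, mk3_1, mk3_2]
          linear_combination h2.1
        · simp only [mk3_2]; exact h2.2
      refine ⟨mk3 (q 0) (q 1 + q 2 / 2) (q 2), ⟨U2_sub_X1 hpU2, ?_⟩, ?_⟩
      · exact ⟨by simp only [mk3_2]; exact hqS.1, by simp only [mk3_2]; exact hqS.2⟩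
      · obtain ⟨c0, c1, c2⟩ := phi_coords_U2 hpU2
        apply ext3 <;> simp only [c0, c1, c2, mk3_0, mk3_1, mk3_2] <;> ring
    · have hpU3 : mk3 (q 0 + 2 * q 2) (q 1 - q 2 / 2) (q 2) ∈ PieceU3 := by
        constructor
        · simp only [mk3_0, mk3_1, mk3_2]
          linear_combination h3.1
        · simp only [mk3_2]; exact h3.2
      refine ⟨mk3 (q 0 + 2 * q 2) (q 1 - q 2 / 2) (q 2), ⟨U3_sub_X1 hpU3, ?_⟩, ?_⟩
      · exact ⟨by simp only [mk3_2]; exact hqS.1, by simp only [mk3_2]; exact hqS.2⟩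
      · obtain ⟨c0, c1, c2⟩ := phi_coords_U3 hpU3
        apply ext3 <;> simp only [c0, c1, c2, mk3_0, mk3_1, mk3_2] <;> ring
  · -- bi-Lipschitz
    rintro p ⟨hpX, hpS⟩ q ⟨hqX, hqS⟩
    have h := keyAll hk.le (X1_cases hpX) (X1_cases hqX) hpS.2 hqS.2
    constructor
    · calc (2100:ℝ)⁻¹ * ‖p - q‖ ≤ (2100:ℝ)⁻¹ * (2100 * ‖phi p - phi q‖) := by
            apply mul_le_mul_of_nonneg_left h.2 (by norm_num)
        _ = ‖phi p - phi q‖ := by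
            rw [← mul_assoc, inv_mul_cancel₀ (by norm_num : (2100:ℝ) ≠ 0), one_mul]
    · exact h.1
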